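/- (Benjamini–Yekutieli) For arbitrarily dependent p-values, the BH procedure at level α ∈ (0,1) has FDR at most ℓ_K·α·K₀/K, where ℓ_K = Σ_{k=1}^K 1/k. -/

import Mathlib

open MeasureTheory ProbabilityTheory Finset
open scoped ENNReal Classical

noncomputable section

/-- The `i`-th smallest value (0-indexed) among `p 0, …, p (K-1)`. -/
def sortAsc {K : ℕ} (p : Fin K → ℝ) : Fin K → ℝ := p ∘ Tuple.sort p

/-- The `i`-th largest value (0-indexed) among `e 0, …, e (K-1)`. -/
def sortDesc {K : ℕ} (e : Fin K → ℝ) : Fin K → ℝ := e ∘ Tuple.sort (fun j => -e j)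

/-- `k* = max {k : K p_(k) / k ≤ α}` (with `max ∅ = 0`), the BH rejection count. -/
def bhCount (K : ℕ) (α : ℝ) (p : Fin K → ℝ) : ℕ :=
  (univ.filter (fun i : Fin K => (K : ℝ) * sortAsc p i / (i.1 + 1) ≤ α)).sup
    (fun i => i.1 + 1)

/-- The BH procedure rejects the hypotheses carrying the `k*` smallest p-values. -/
def bhRejects (K : ℕ) (α : ℝ) (p : Fin K → ℝ) : Finset (Fin K) :=
  univ.filter (fun k => ∃ i : Fin K, i.1 + 1 ≤ bhCount K α p ∧ p k ≤ sortAsc p i)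

/-- `k* = max {k : k e_[k] / K ≥ 1/α}`, the e-BH rejection count. -/
def ebhCount (K : ℕ) (α : ℝ) (e : Fin K → ℝ) : ℕ :=
  (univ.filter (fun i : Fin K => 1 / α ≤ (i.1 + 1) * sortDesc e i / K)).sup
    (fun i => i.1 + 1)

/-- The e-BH procedure rejects the hypotheses carrying the `k*` largest e-values. -/
def ebhRejects (K : ℕ) (α : ℝ) (e : Fin K → ℝ) : Finset (Fin K) :=
  univ.filter (fun k => ∃ i : Fin K, i.1 + 1 ≤ ebhCount K α e ∧ sortDesc e i ≤ e k)

/-- Simes function `S_K(p) = min_k (K/k) p_(k)`. -/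
def simes (K : ℕ) (p : Fin K → ℝ) : ℝ := ⨅ i : Fin K, (K : ℝ) / (i.1 + 1) * sortAsc p i

/-- Harmonic number `ℓ_K = ∑_{k=1}^K 1/k`. -/
def harm (K : ℕ) : ℝ := ∑ k ∈ Finset.Icc 1 K, (1 : ℝ) / k

/-- An increasing (upper) subset of `ℝ^K`. -/
def IncreasingSet {K : ℕ} (A : Set (Fin K → ℝ)) : Prop := ∀ x ∈ A, ∀ y, x ≤ y → y ∈ A

/-- Positive regression dependence on the subset `N` of nulls. -/
def PRDS {Ω : Type*} [MeasurableSpace Ω] (μ : Measure Ω) {K : ℕ}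
    (P : Fin K → Ω → ℝ) (N : Finset (Fin K)) : Prop :=
  ∀ k ∈ N, ∀ A : Set (Fin K → ℝ), MeasurableSet A → IncreasingSet A →
    Monotone (fun x : ℝ => μ[|{ω | P k ω ≤ x}] {ω | (fun j => P j ω) ∈ A})

/-- False discovery proportion of a rejection set `D` w.r.t. the null set `N`. -/
def fdp {K : ℕ} (D N : Finset (Fin K)) : ℝ := ((D ∩ N).card : ℝ) / (max D.card 1 : ℕ)

end


lemma bh_threshold {K : ℕ} {α : ℝ} {p : Fin K → ℝ} (h : 1 ≤ bhCount K α p) :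
    ∃ i : Fin K, i.1 + 1 = bhCount K α p ∧ (K : ℝ) * sortAsc p i / (i.1 + 1) ≤ α := by
  classical
  by_cases hne : (univ.filter (fun i : Fin K => (K : ℝ) * sortAsc p i / (i.1 + 1) ≤ α)).Nonempty
  · obtain ⟨i, hi, hsup⟩ := Finset.exists_mem_eq_sup _ hne (fun i : Fin K => i.1 + 1)
    exact ⟨i, hsup.symm, (Finset.mem_filter.mp hi).2⟩
  · exfalso
    rw [Finset.not_nonempty_iff_eq_empty] at hne
    have : bhCount K α p = 0 := by rw [bhCount, hne]; simp
    omega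

lemma sortAsc_mono {K : ℕ} (p : Fin K → ℝ) : Monotone (sortAsc p) :=
  Tuple.monotone_sort p

lemma bh_mem_le {K : ℕ} (hK : 0 < K) {α : ℝ} {p : Fin K → ℝ}
    {k : Fin K} (hk : k ∈ bhRejects K α p) :
    p k ≤ α * bhCount K α p / K := by
  obtain ⟨i, hi, hpk⟩ := (Finset.mem_filter.mp hk).2
  have h1 : 1 ≤ bhCount K α p := le_trans (by omega) hi
  obtain ⟨i0, hi0, hle⟩ := bh_threshold h1
  have hii : i ≤ i0 := by rw [Fin.le_def]; omega
  have h2 : sortAsc p i ≤ sortAsc p i0 := sortAsc_mono p hii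
  have hKpos : (0:ℝ) < K := by exact_mod_cast hK
  have hipos : (0:ℝ) < i0.1 + 1 := by positivity
  rw [div_le_iff₀ hipos] at hle
  rw [← hi0]
  push_cast
  rw [le_div_iff₀ hKpos]
  nlinarith

lemma bhRejects_empty {K : ℕ} {α : ℝ} {p : Fin K → ℝ} (h : bhCount K α p = 0) :
    bhRejects K α p = ∅ := by
  rw [bhRejects, Finset.filter_eq_empty_iff]
  rintro k - ⟨i, hi, -⟩
  omega

lemma bhCount_le_card {K : ℕ} {α : ℝ} {p : Fin K → ℝ} :
    bhCount K α p ≤ (bhRejects K α p).card := by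
  classical
  rcases Nat.eq_zero_or_pos (bhCount K α p) with h | h
  · simp [h]
  · obtain ⟨i0, hi0, -⟩ := bh_threshold h
    have hsub : (Finset.Iic i0).image (Tuple.sort p) ⊆ bhRejects K α p := by
      intro k hk
      obtain ⟨i, hi, rfl⟩ := Finset.mem_image.mp hk
      refine Finset.mem_filter.mpr ⟨Finset.mem_univ _, ⟨i0, by omega, ?_⟩⟩
      exact sortAsc_mono p (Finset.mem_Iic.mp hi)
    calc bhCount K α p = (Finset.Iic i0).card := by rw [Fin.card_Iic]; omega
      _ = ((Finset.Iic i0).image (Tuple.sort p)).card :=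
          (Finset.card_image_of_injective _ (Tuple.sort p).injective).symm
      _ ≤ _ := Finset.card_le_card hsub

lemma bhCount_le {K : ℕ} {α : ℝ} {p : Fin K → ℝ} : bhCount K α p ≤ K := by
  apply Finset.sup_le
  intro i _
  omega

lemma abel_id (F : ℕ → ℝ) (h0 : F 0 = 0) : ∀ n : ℕ,
    ∑ j ∈ Finset.Icc 1 n, (F j - F (j - 1)) / j
      = F n / n + ∑ j ∈ Finset.Icc 1 (n - 1), F j * (1 / j - 1 / (j + 1)) := by
  intro n
  induction n with
  | zero => simp
  | succ n ih =>
    rw [Finset.sum_Icc_succ_top (by omega : 1 ≤ n + 1), ih]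
    rcases Nat.eq_zero_or_pos n with hn | hn
    · subst hn; simp [h0]
    · obtain ⟨m, rfl⟩ : ∃ m, n = m + 1 := ⟨n - 1, by omega⟩
      simp only [Nat.add_sub_cancel]
      rw [Finset.sum_Icc_succ_top (by omega : 1 ≤ m + 1)]
      have h1 : ((1:ℕ) + m + 1 : ℝ) ≠ 0 := by positivity
      push_cast
      have h2 : ((1:ℕ) + m : ℝ) ≠ 0 := by positivity
      push_cast at h1 h2 ⊢
      field_simp
      ring

lemma harm_reindex : ∀ K : ℕ, 1 ≤ K →
    ∑ j ∈ Finset.Icc 1 K, (1:ℝ) / j = 1 + ∑ j ∈ Finset.Icc 1 (K - 1), (1:ℝ) / (j + 1) := by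
  intro K
  induction K with
  | zero => omega
  | succ n ih =>
    intro _
    rcases Nat.eq_zero_or_pos n with hn | hn
    · subst hn; simp
    · rw [Finset.sum_Icc_succ_top (by omega : 1 ≤ n + 1), ih hn]
      simp only [Nat.add_sub_cancel]
      obtain ⟨m, rfl⟩ : ∃ m, n = m + 1 := ⟨n - 1, by omega⟩
      rw [Finset.sum_Icc_succ_top (by omega : 1 ≤ m + 1)]
      push_cast
      ring

lemma abel_bound {c : ℝ} (hc : 0 ≤ c) {n : ℕ} (hn : 1 ≤ n) (F : ℕ → ℝ) (h0 : F 0 = 0)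
    (hF : ∀ j, 1 ≤ j → j ≤ n → F j ≤ c * j) :
    ∑ j ∈ Finset.Icc 1 n, (F j - F (j - 1)) / j ≤ c * ∑ j ∈ Finset.Icc 1 n, (1:ℝ) / j := by
  rw [abel_id F h0, harm_reindex n hn, mul_add, mul_one, Finset.mul_sum]
  gcongr ?_ + ?_
  · have hnpos : (0:ℝ) < n := by exact_mod_cast hn
    rw [div_le_iff₀ hnpos]
    calc F n ≤ c * n := hF n hn le_rfl
      _ = c * n := rfl
  · apply Finset.sum_le_sum
    intro j hj
    obtain ⟨hj1, hj2⟩ := Finset.mem_Icc.mp hj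
    have hjpos : (0:ℝ) < j := by exact_mod_cast hj1
    have hcoef : (0:ℝ) ≤ 1 / j - 1 / (j + 1) := by
      rw [sub_nonneg]
      apply one_div_le_one_div_of_le hjpos
      linarith
    calc F j * (1 / j - 1 / (j + 1)) ≤ (c * j) * (1 / j - 1 / (j + 1)) := by
          apply mul_le_mul_of_nonneg_right (hF j hj1 (by omega)) hcoef
      _ = c * (1 / (j + 1)) := by field_simp; ring

/-- The `j`-th interval `(c(j-1), cj]` (with the first one being `(-∞, c]`). -/
noncomputable def byIv (c : ℝ) (j : ℕ) : Set ℝ :=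
  if j = 1 then Set.Iic c else Set.Ioc (c * ((j : ℝ) - 1)) (c * j)

lemma byIv_measurable (c : ℝ) (j : ℕ) : MeasurableSet (byIv c j) := by
  rw [byIv]
  split
  · exact measurableSet_Iic
  · exact measurableSet_Ioc

lemma byIv_mem {c : ℝ} (hc : 0 ≤ c) {x : ℝ} {R : ℕ} (hR : 1 ≤ R) (hx : x ≤ c * R) :
    ∃ j, 1 ≤ j ∧ j ≤ R ∧ x ∈ byIv c j := by
  have hex : ∃ j : ℕ, x ≤ c * j := ⟨R, hx⟩
  classical
  set j0 := Nat.find hex with hj0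
  have hj0le : j0 ≤ R := Nat.find_le hx
  rcases le_or_gt j0 1 with h | h
  · refine ⟨1, le_rfl, hR, ?_⟩
    rw [byIv, if_pos rfl, Set.mem_Iic]
    calc x ≤ c * j0 := Nat.find_spec hex
      _ ≤ c * 1 := by
          apply mul_le_mul_of_nonneg_left _ hc
          exact_mod_cast h
      _ = c := mul_one c
  · refine ⟨j0, by omega, hj0le, ?_⟩
    rw [byIv, if_neg (by omega), Set.mem_Ioc]
    refine ⟨?_, Nat.find_spec hex⟩
    have hmin := Nat.find_min hex (show j0 - 1 < j0 by omega)
    push_neg at hmin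
    have hcast : ((j0 - 1 : ℕ) : ℝ) = (j0 : ℝ) - 1 := by
      have : 1 ≤ j0 := by omega
      push_cast [this]
      ring
    rw [← hcast]
    exact hmin

lemma exp_bound {Ω : Type*} [MeasurableSpace Ω] (μ : Measure Ω) [IsProbabilityMeasure μ]
    {f : Ω → ℝ} (hf : Measurable f) {c : ℝ} (hc : 0 < c) {K : ℕ} (hK : 1 ≤ K)
    (hbound : ∀ j : ℕ, 1 ≤ j → j ≤ K → (μ {ω | f ω ≤ c * j}).toReal ≤ c * j) :
    ∑ j ∈ Finset.Icc 1 K, (1 / (j : ℝ)) * (μ (f ⁻¹' byIv c j)).toReal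
      ≤ c * ∑ j ∈ Finset.Icc 1 K, (1 : ℝ) / j := by
  classical
  set F : ℕ → ℝ := fun j => if j = 0 then 0 else (μ {ω | f ω ≤ c * j}).toReal with hF
  have hterm : ∀ j ∈ Finset.Icc 1 K,
      (1 / (j : ℝ)) * (μ (f ⁻¹' byIv c j)).toReal = (F j - F (j - 1)) / j := by
    intro j hj
    obtain ⟨h1, h2⟩ := Finset.mem_Icc.mp hj
    rcases eq_or_lt_of_le h1 with h | h
    · rw [← h]
      rw [hF]
      norm_num [byIv]
      rfl
    · have hne1 : j ≠ 1 := by omega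
      have hsub : {ω | f ω ≤ c * ((j : ℝ) - 1)} ⊆ {ω | f ω ≤ c * j} := by
        intro ω hω
        simp only [Set.mem_setOf_eq] at hω ⊢
        nlinarith
      have hmeasB : MeasurableSet {ω | f ω ≤ c * ((j : ℝ) - 1)} :=
        measurableSet_le hf measurable_const
      have hdiff : f ⁻¹' byIv c j = {ω | f ω ≤ c * j} \ {ω | f ω ≤ c * ((j : ℝ) - 1)} := by
        rw [byIv, if_neg hne1]
        ext ω
        simp only [Set.mem_preimage, Set.mem_Ioc, Set.mem_diff, Set.mem_setOf_eq, not_le]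
        tauto
      have hcast : ((j - 1 : ℕ) : ℝ) = (j : ℝ) - 1 := by
        have : 1 ≤ j := by omega
        push_cast [this]; ring
      rw [hdiff, measure_diff hsub hmeasB.nullMeasurableSet (measure_ne_top μ _),
        ENNReal.toReal_sub_of_le (measure_mono hsub) (measure_ne_top μ _)]
      rw [hF]
      simp only [if_neg (by omega : j ≠ 0), if_neg (by omega : j - 1 ≠ 0), hcast]
      rw [one_div, inv_mul_eq_div]
  rw [Finset.sum_congr rfl hterm]
  apply abel_bound (le_of_lt hc) hK F (by simp [hF])
  intro j hj1 hj2
  rw [hF]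
  simp only [if_neg (by omega : j ≠ 0)]
  exact hbound j hj1 hj2


/-- **Theorem 4 (Benjamini–Yekutieli).** For arbitrarily dependent p-values, the BH
procedure at level `α ∈ (0,1)` has FDR at most `ℓ_K α K₀ / K`, `ℓ_K = ∑_{k=1}^K 1/k`. -/
theorem by_fdr
    {Ω : Type*} [MeasurableSpace Ω] (μ : Measure Ω) [IsProbabilityMeasure μ]
    {K : ℕ} (hK : 0 < K) {α : ℝ} (hα : α ∈ Set.Ioo (0 : ℝ) 1)
    (P : Fin K → Ω → ℝ) (hP : ∀ k, Measurable (P k)) (N : Finset (Fin K))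
    (h_pvar : ∀ k ∈ N, ∀ x ∈ Set.Ioo (0 : ℝ) 1, μ {ω | P k ω ≤ x} ≤ ENNReal.ofReal x) :
    ∫ ω, fdp (bhRejects K α (fun k => P k ω)) N ∂μ ≤ harm K * α * N.card / K := by
  classical
  obtain ⟨hα0, hα1⟩ := hα
  have hKR : (0 : ℝ) < K := by exact_mod_cast hK
  set c : ℝ := α / K with hc_def
  have hc0 : 0 < c := by positivity
  set g : Ω → ℝ := fun ω =>
    ∑ k ∈ N, ∑ j ∈ Finset.Icc 1 K, (1 / (j : ℝ)) * (P k ⁻¹' byIv c j).indicator 1 ω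
    with hg_def
  have hAmeas : ∀ k j, MeasurableSet (P k ⁻¹' byIv c j) :=
    fun k j => (hP k) (byIv_measurable c j)
  have hInt : Integrable g μ := by
    apply integrable_finset_sum
    intro k _
    apply integrable_finset_sum
    intro j _
    exact (((integrable_const (1 : ℝ)).indicator (hAmeas k j)).const_mul _)
  have hg0 : ∀ ω, 0 ≤ g ω := by
    intro ω
    apply Finset.sum_nonneg
    intro k _
    apply Finset.sum_nonneg
    intro j _
    apply mul_nonneg (by positivity)
    exact Set.indicator_nonneg (fun _ _ => zero_le_one) ω
  -- pointwise bound
  have hpt : ∀ ω, fdp (bhRejects K α fun k => P k ω) N ≤ g ω := by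
    intro ω
    set D := bhRejects K α (fun k => P k ω) with hD
    rcases Nat.eq_zero_or_pos (bhCount K α (fun k => P k ω)) with h0 | h0
    · rw [hD, bhRejects_empty h0]
      simpa [fdp] using hg0 ω
    · have hcard : bhCount K α (fun k => P k ω) ≤ D.card := bhCount_le_card
      have hcardK : D.card ≤ K := by
        calc D.card ≤ (Finset.univ : Finset (Fin K)).card := Finset.card_le_card (by simp [hD, bhRejects])
          _ = K := by simp
      have hR1 : 1 ≤ D.card := le_trans h0 hcard
      have hfdp : fdp D N = ∑ _k ∈ D ∩ N, (1 : ℝ) / (D.card : ℝ) := by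
        rw [fdp, max_eq_left hR1, Finset.sum_const, nsmul_eq_mul, mul_one_div]
      rw [hfdp]
      calc ∑ _k ∈ D ∩ N, (1 : ℝ) / (D.card : ℝ)
          ≤ ∑ k ∈ D ∩ N, ∑ j ∈ Finset.Icc 1 K,
              (1 / (j : ℝ)) * (P k ⁻¹' byIv c j).indicator 1 ω := by
            apply Finset.sum_le_sum
            intro k hk
            have hkD : k ∈ D := (Finset.mem_inter.mp hk).1
            have hple : P k ω ≤ α * (bhCount K α (fun k => P k ω)) / K :=
              bh_mem_le hK hkD
            have hple2 : P k ω ≤ c * D.card := by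
              rw [hc_def]
              calc P k ω ≤ α * (bhCount K α (fun k => P k ω)) / K := hple
                _ = α / K * (bhCount K α (fun k => P k ω)) := by ring
                _ ≤ α / K * D.card := by
                    apply mul_le_mul_of_nonneg_left _ (by positivity)
                    exact_mod_cast hcard
            obtain ⟨j, hj1, hjR, hjmem⟩ := byIv_mem (le_of_lt hc0) hR1 hple2
            have hjK : j ≤ K := le_trans hjR hcardK
            have hsingle : (1 : ℝ) / (D.card : ℝ)
                ≤ (1 / (j : ℝ)) * (P k ⁻¹' byIv c j).indicator 1 ω := by
              rw [Set.indicator_of_mem (show ω ∈ P k ⁻¹' byIv c j from hjmem), Pi.one_apply, mul_one]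
              apply one_div_le_one_div_of_le (by exact_mod_cast hj1)
              exact_mod_cast hjR
            refine le_trans hsingle ?_
            apply Finset.single_le_sum _ (Finset.mem_Icc.mpr ⟨hj1, hjK⟩)
            intro i _
            apply mul_nonneg (by positivity)
            exact Set.indicator_nonneg (fun _ _ => zero_le_one) ω
        _ ≤ g ω := by
            apply Finset.sum_le_sum_of_subset_of_nonneg (Finset.inter_subset_right)
            intro k _ _
            apply Finset.sum_nonneg
            intro j _
            apply mul_nonneg (by positivity)
            exact Set.indicator_nonneg (fun _ _ => zero_le_one) ω
  have hfdp0 : ∀ ω, 0 ≤ fdp (bhRejects K α fun k => P k ω) N := by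
    intro ω
    rw [fdp]
    exact div_nonneg (Nat.cast_nonneg _) (Nat.cast_nonneg _)
  have hle1 : ∫ ω, fdp (bhRejects K α (fun k => P k ω)) N ∂μ ≤ ∫ ω, g ω ∂μ :=
    integral_mono_of_nonneg (Filter.Eventually.of_forall hfdp0) hInt
      (Filter.Eventually.of_forall hpt)
  have hgint : ∫ ω, g ω ∂μ
      = ∑ k ∈ N, ∑ j ∈ Finset.Icc 1 K, (1 / (j : ℝ)) * (μ (P k ⁻¹' byIv c j)).toReal := by
    rw [hg_def, integral_finset_sum]
    · apply Finset.sum_congr rfl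
      intro k _
      rw [integral_finset_sum]
      · apply Finset.sum_congr rfl
        intro j _
        rw [integral_const_mul, integral_indicator_one (hAmeas k j), Measure.real]
      · intro j _
        exact (((integrable_const (1 : ℝ)).indicator (hAmeas k j)).const_mul _)
    · intro k _
      apply integrable_finset_sum
      intro j _
      exact (((integrable_const (1 : ℝ)).indicator (hAmeas k j)).const_mul _)
  have hk_bound : ∀ k ∈ N,
      ∑ j ∈ Finset.Icc 1 K, (1 / (j : ℝ)) * (μ (P k ⁻¹' byIv c j)).toReal
        ≤ c * ∑ j ∈ Finset.Icc 1 K, (1 : ℝ) / j := by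
    intro k hkN
    apply exp_bound μ (hP k) hc0 hK
    intro j hj1 hj2
    apply ENNReal.toReal_le_of_le_ofReal (by positivity)
    apply h_pvar k hkN
    have hcj : c * j ≤ α := by
      rw [hc_def]
      calc α / K * j ≤ α / K * K := by
            apply mul_le_mul_of_nonneg_left _ (by positivity)
            exact_mod_cast hj2
        _ = α := by field_simp
    exact ⟨by positivity, lt_of_le_of_lt hcj hα1⟩
  calc ∫ ω, fdp (bhRejects K α (fun k => P k ω)) N ∂μ ≤ ∫ ω, g ω ∂μ := hle1
    _ = ∑ k ∈ N, ∑ j ∈ Finset.Icc 1 K, (1 / (j : ℝ)) * (μ (P k ⁻¹' byIv c j)).toReal := hgint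
    _ ≤ ∑ _k ∈ N, c * ∑ j ∈ Finset.Icc 1 K, (1 : ℝ) / j := Finset.sum_le_sum hk_bound
    _ = (N.card : ℝ) * (c * harm K) := by
        rw [Finset.sum_const, nsmul_eq_mul, harm]
    _ = harm K * α * N.card / K := by
        rw [hc_def]; ring
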